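/- Let G be a real Lie group acting linearly on a finite-dimensional real vector space V. If v ∈ V is non-zero and 0 is a limit point of the orbit Gv, then the orbit Gv is unbounded. -/

import Mathlib

/-!
STATEMENT 3: Let `G` be a real Lie group acting linearly (and continuously)
on a finite-dimensional real vector space `V`.  If `v ∈ V` is non-zero and
`0` is a limit point of the orbit `G v` (i.e. there is a sequence `gⱼ` with
`gⱼ v → 0`), then the orbit `G v` is unbounded.

`G` is encoded as a topological group acting by a continuous linear
representation, which suffices for the statement.
-/

open Filter
open scoped Topology

theorem orbit_unbounded_of_zero_limit_point
    {G : Type*} [Group G] [TopologicalSpace G] [IsTopologicalGroup G]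
    {V : Type*} [NormedAddCommGroup V] [NormedSpace ℝ V] [FiniteDimensional ℝ V]
    (ρ : Representation ℝ G V)
    (hcont : Continuous fun p : G × V => ρ p.1 p.2)
    (v : V) (hv : v ≠ 0)
    (hlim : ∃ u : ℕ → G, Tendsto (fun j => ρ (u j) v) atTop (𝓝 (0 : V))) :
    ¬ Bornology.IsBounded (Set.range fun h : G => ρ h v) := by
  intro hbdd
  obtain ⟨u, hu⟩ := hlim
  -- extract a uniform bound M on the orbit
  obtain ⟨M, hM⟩ := (isBounded_iff_forall_norm_le).1 hbdd
  have horb : ∀ g : G, ‖ρ g v‖ ≤ M := fun g => hM _ ⟨g, rfl⟩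
  -- the span of the orbit
  set W : Submodule ℝ V := Submodule.span ℝ (Set.range fun h : G => ρ h v) with hW
  -- pointwise bound on W by span induction
  have hpt : ∀ w : V, w ∈ W → ∃ C, ∀ g : G, ‖ρ g w‖ ≤ C := by
    intro w hw
    induction hw using Submodule.span_induction with
    | mem x hx =>
        obtain ⟨h, rfl⟩ := hx
        exact ⟨M, fun g => by
          have : ρ g (ρ h v) = ρ (g * h) v := by
            rw [map_mul]; rfl
          rw [this]; exact horb _⟩
    | zero => exact ⟨0, fun g => by simp⟩
    | add x y _ _ hx hy =>
        obtain ⟨C1, h1⟩ := hx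
        obtain ⟨C2, h2⟩ := hy
        exact ⟨C1 + C2, fun g => by
          calc ‖ρ g (x + y)‖ = ‖ρ g x + ρ g y‖ := by rw [map_add]
          _ ≤ ‖ρ g x‖ + ‖ρ g y‖ := norm_add_le _ _
          _ ≤ C1 + C2 := add_le_add (h1 g) (h2 g)⟩
    | smul c x _ hx =>
        obtain ⟨C, hC⟩ := hx
        exact ⟨|c| * C, fun g => by
          have : ρ g (c • x) = c • ρ g x := map_smul _ _ _
          rw [this, norm_smul, Real.norm_eq_abs]
          have h0 : (0:ℝ) ≤ ‖ρ g x‖ := norm_nonneg _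
          exact mul_le_mul_of_nonneg_left (hC g) (abs_nonneg c)⟩
  -- the family of continuous linear maps W → V
  let T : G → (W →L[ℝ] V) := fun g =>
    LinearMap.toContinuousLinearMap ((ρ g).comp W.subtype)
  have hTapp : ∀ (g : G) (w : W), T g w = ρ g (w : V) := fun g w => rfl
  -- Banach–Steinhaus: uniform bound
  obtain ⟨C, hC⟩ := banach_steinhaus (g := T) (fun x => by
    obtain ⟨C, hc⟩ := hpt x x.2
    exact ⟨C, fun g => by rw [hTapp]; exact hc g⟩)
  -- v and all orbit points lie in W
  have hvW : ∀ g : G, ρ g v ∈ W :=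
    fun g => Submodule.subset_span ⟨g, rfl⟩
  -- key inequality: ‖v‖ ≤ C * ‖ρ (u j) v‖
  have key : ∀ j : ℕ, ‖v‖ ≤ C * ‖ρ (u j) v‖ := by
    intro j
    have hinv : ρ ((u j)⁻¹) (ρ (u j) v) = v := by
      rw [show ρ ((u j)⁻¹) (ρ (u j) v) = ρ ((u j)⁻¹ * u j) v by rw [map_mul]; rfl]
      simp
    calc ‖v‖ = ‖T ((u j)⁻¹) ⟨ρ (u j) v, hvW _⟩‖ := by rw [hTapp]; exact (congrArg _ hinv.symm)
    _ ≤ ‖T ((u j)⁻¹)‖ * ‖(⟨ρ (u j) v, hvW _⟩ : W)‖ := (T _).le_opNorm _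
    _ ≤ C * ‖ρ (u j) v‖ := by
        apply mul_le_mul_of_nonneg_right (hC _) (norm_nonneg _)
  -- take the limit: ‖v‖ ≤ 0
  have hlim0 : Tendsto (fun j => C * ‖ρ (u j) v‖) atTop (𝓝 0) := by
    have := (hu.norm).const_mul C
    simpa using this
  have : ‖v‖ ≤ 0 := ge_of_tendsto hlim0 (Eventually.of_forall key)
  exact hv (norm_le_zero_iff.1 this)
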